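/- Let X be a d-box with finite factors of size ≥ 2. Then the functions η_B, for B ranging over boxes B_1 × ... × B_d with each |B_i| odd, form a basis of the space of real-valued additive functions on proper boxes of X, where η_B(A) = Π_i [|A_i ∩ B_i| is odd]. -/

import Mathlib

/-- The nonempty proper subsets of a finite set `X`. -/
abbrev PSub (X : Type) [Fintype X] [DecidableEq X] :=
  {A : Finset X // A.Nonempty ∧ A ≠ Finset.univ}

/-- Complementation on nonempty proper subsets. -/
def pcompl {X : Type} [Fintype X] [DecidableEq X] (A : PSub X) : PSub X :=
  ⟨(A.1)ᶜ, by
    obtain ⟨hne, hnu⟩ := A.2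
    refine ⟨?_, ?_⟩
    · rw [Finset.nonempty_iff_ne_empty]
      simpa using hnu
    · intro h
      rw [Finset.compl_eq_univ_iff] at h
      exact Finset.nonempty_iff_ne_empty.mp hne h⟩

/-- Additivity on proper boxes of a `d`-box, via twin pairs. -/
def IsAdditiveBox {d : ℕ} {X : Fin d → Type} [∀ i, Fintype (X i)] [∀ i, DecidableEq (X i)]
    (f : (∀ i, PSub (X i)) → ℝ) : Prop :=
  ∀ (i : Fin d) (A C : ∀ i, PSub (X i)), (∀ j, j ≠ i → A j = C j) →
    f A + f (Function.update A i (pcompl (A i)))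
      = f C + f (Function.update C i (pcompl (C i)))

/-- `η_B(A) = ∏ᵢ [|Aᵢ ∩ Bᵢ| is odd]` for a box `B` with all factors of odd size. -/
def etaBox {d : ℕ} {X : Fin d → Type} [∀ i, Fintype (X i)] [∀ i, DecidableEq (X i)]
    (B : ∀ i, Finset (X i)) : (∀ i, PSub (X i)) → ℝ :=
  fun A => ∏ i, (if Odd ((A i).1 ∩ B i).card then (1 : ℝ) else 0)


open Finset

section OneDim
variable {Y : Type} [Fintype Y] [DecidableEq Y]

lemma neg_one_pow_congr_mod2 {a b : ℕ} (h : a % 2 = b % 2) : (-1:ℝ)^a = (-1)^b := by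
  rcases Nat.even_or_odd a with ha | ha
  · have hb : Even b := by rw [Nat.even_iff] at *; omega
    rw [ha.neg_one_pow, hb.neg_one_pow]
  · have hb : Odd b := by rw [Nat.odd_iff] at *; omega
    rw [ha.neg_one_pow, hb.neg_one_pow]

lemma sum_char (S : Finset Y) :
    ∑ B : Finset Y, (-1:ℝ)^((S ∩ B).card) =
      if S = ∅ then (2:ℝ)^(Fintype.card Y) else 0 := by
  rcases eq_or_ne S ∅ with rfl | hS
  · simp [Fintype.card_finset]
  · simp only [if_neg hS]
    obtain ⟨x, hx⟩ := nonempty_iff_ne_empty.2 hS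
    refine Finset.sum_involution
      (fun B _ => if x ∈ B then B.erase x else insert x B) ?_ ?_ (fun _ _ => mem_univ _) ?_
    · intro B _
      by_cases hxB : x ∈ B
      · simp only [if_pos hxB]
        have h1 : S ∩ B.erase x = (S ∩ B).erase x := by
          ext y; simp [Finset.mem_erase, Finset.mem_inter]; tauto
        have hx2 : x ∈ S ∩ B := Finset.mem_inter.2 ⟨hx, hxB⟩
        have h2 : (S ∩ B).card = ((S ∩ B).erase x).card + 1 := by
          rw [Finset.card_erase_of_mem hx2]
          have := Finset.card_pos.2 ⟨x, hx2⟩; omega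
        rw [h1, h2, pow_succ]; ring
      · simp only [if_neg hxB]
        have h1 : S ∩ insert x B = insert x (S ∩ B) := by
          ext y
          simp only [Finset.mem_insert, Finset.mem_inter]
          rcases eq_or_ne y x with rfl | hyx
          · simp [hx]
          · simp [hyx]
        have hx2 : x ∉ S ∩ B := fun h => hxB (Finset.mem_inter.1 h).2
        rw [h1, Finset.card_insert_of_notMem hx2, pow_succ]; ring
    · intro B _ _
      by_cases hxB : x ∈ B
      · simp only [if_pos hxB]
        intro h; rw [← h] at hxB; exact (Finset.notMem_erase x B) hxB
      · simp only [if_neg hxB]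
        intro h; rw [← h] at hxB; exact hxB (Finset.mem_insert_self x B)
    · intro B _
      by_cases hxB : x ∈ B
      · simp [hxB, Finset.notMem_erase, Finset.insert_erase hxB]
      · simp [hxB, Finset.erase_insert hxB]

end OneDim

section OneDim2
open scoped symmDiff
variable {Y : Type} [Fintype Y] [DecidableEq Y]

lemma card_symmDiff_par (u v : Finset Y) :
    (u ∆ v).card + 2 * (u ∩ v).card = u.card + v.card := by
  have hd : Disjoint (u \ v) (v \ u) := disjoint_sdiff_sdiff
  have h1 : (u ∆ v).card = (u \ v).card + (v \ u).card := by
    rw [symmDiff_def, sup_eq_union, card_union_of_disjoint hd]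
  have h2 := Finset.card_inter_add_card_sdiff u v
  have h3 := Finset.card_inter_add_card_sdiff v u
  rw [Finset.inter_comm v u] at h3
  omega

lemma char_mul (A B S : Finset Y) :
    (-1:ℝ)^((A ∩ B).card) * (-1)^((A ∩ S).card) = (-1)^((A ∩ (B ∆ S)).card) := by
  rw [← pow_add]
  apply neg_one_pow_congr_mod2
  have h1 : A ∩ (B ∆ S) = (A ∩ B) ∆ (A ∩ S) := inf_symmDiff_distrib_left A B S
  have h2 := card_symmDiff_par (A ∩ B) (A ∩ S)
  rw [h1]; omega

lemma sum_char_univ (S : Finset Y) :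
    ∑ B : Finset Y, (-1:ℝ)^((S ∩ B).card + B.card) =
      if S = Finset.univ then (2:ℝ)^(Fintype.card Y) else 0 := by
  have key : ∀ B : Finset Y, (-1:ℝ)^((S ∩ B).card + B.card) = (-1)^((Sᶜ ∩ B).card) := by
    intro B
    apply neg_one_pow_congr_mod2
    have h1 : (B ∩ S).card + (B \ S).card = B.card := Finset.card_inter_add_card_sdiff B S
    have h2 : Sᶜ ∩ B = B \ S := by
      ext y; simp only [Finset.mem_inter, Finset.mem_sdiff, Finset.mem_compl]; tauto
    have h3 : S ∩ B = B ∩ S := Finset.inter_comm S B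
    rw [h2, h3]; omega
  simp_rw [key]
  rw [sum_char]
  congr 1
  simp [Finset.compl_eq_empty_iff]

/-- Sum over odd-cardinality subsets. -/
lemma sum_char_odd (S : Finset Y) :
    ∑ B ∈ univ.filter (fun B : Finset Y => Odd B.card), (-1:ℝ)^((S ∩ B).card) =
      ((if S = ∅ then (2:ℝ)^(Fintype.card Y) else 0)
        - (if S = Finset.univ then (2:ℝ)^(Fintype.card Y) else 0)) / 2 := by
  have h1 := sum_char S
  have h2 := sum_char_univ S
  have hsplit := Finset.sum_filter_add_sum_filter_not univ (fun B : Finset Y => Odd B.card)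
    (fun B => (-1:ℝ)^((S ∩ B).card))
  have hsplit2 := Finset.sum_filter_add_sum_filter_not univ (fun B : Finset Y => Odd B.card)
    (fun B => (-1:ℝ)^((S ∩ B).card + B.card))
  have e1 : ∑ B ∈ univ.filter (fun B : Finset Y => Odd B.card),
      (-1:ℝ)^((S ∩ B).card + B.card)
      = -∑ B ∈ univ.filter (fun B : Finset Y => Odd B.card), (-1:ℝ)^((S ∩ B).card) := by
    rw [← Finset.sum_neg_distrib]
    apply Finset.sum_congr rfl
    intro B hB
    rw [Finset.mem_filter] at hB
    rw [pow_add, hB.2.neg_one_pow]; ring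
  have e2 : ∑ B ∈ univ.filter (fun B : Finset Y => ¬ Odd B.card),
      (-1:ℝ)^((S ∩ B).card + B.card)
      = ∑ B ∈ univ.filter (fun B : Finset Y => ¬ Odd B.card), (-1:ℝ)^((S ∩ B).card) := by
    apply Finset.sum_congr rfl
    intro B hB
    rw [Finset.mem_filter] at hB
    rw [pow_add, (Nat.not_odd_iff_even.1 hB.2).neg_one_pow, mul_one]
  rw [e1, e2] at hsplit2
  rw [h1] at hsplit
  rw [h2] at hsplit2
  linarith

end OneDim2

section OneDim3
open scoped symmDiff
variable {Y : Type} [Fintype Y] [DecidableEq Y]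

lemma sum_psub (hY : 1 ≤ Fintype.card Y) (g : Finset Y → ℝ) :
    ∑ A : PSub Y, g A.1 = (∑ A : Finset Y, g A) - g ∅ - g Finset.univ := by
  classical
  have : Nonempty Y := Fintype.card_pos_iff.mp hY
  have hne : (∅ : Finset Y) ≠ Finset.univ := by
    intro h
    exact Finset.univ_nonempty.ne_empty h.symm
  have h1 : ∑ A ∈ univ.filter (fun A : Finset Y => A.Nonempty ∧ A ≠ Finset.univ), g A
      = ∑ A : PSub Y, g A.1 := by
    apply Finset.sum_subtype
    intro A; simp
  have h2 : univ.filter (fun A : Finset Y => ¬(A.Nonempty ∧ A ≠ Finset.univ))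
      = {∅, Finset.univ} := by
    ext A
    simp only [Finset.mem_filter, Finset.mem_univ, true_and, Finset.mem_insert,
      Finset.mem_singleton, Finset.nonempty_iff_ne_empty]
    tauto
  have h3 := Finset.sum_filter_add_sum_filter_not univ
    (fun A : Finset Y => A.Nonempty ∧ A ≠ Finset.univ) g
  rw [h1, h2, Finset.sum_pair hne] at h3
  linarith

end OneDim3

section OneDim4
open scoped symmDiff
variable {Y : Type} [Fintype Y] [DecidableEq Y]

/-- elementary factor of `etaBox`. -/
def vv (B : Finset Y) (A : PSub Y) : ℝ := if Odd (A.1 ∩ B).card then 1 else 0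

/-- dual weight. -/
noncomputable def ww (B : Finset Y) (A : PSub Y) : ℝ :=
  (2 / ((2:ℝ)^(Fintype.card Y) - 2) - (-1:ℝ)^((A.1 ∩ B).card)) * (2 / (2:ℝ)^(Fintype.card Y))

/-- reproducing kernel. -/
noncomputable def mm (a b : PSub Y) : ℝ :=
  ((if b = a then (1:ℝ) else 0) - (if b = pcompl a then 1 else 0)) / 2
    + 1 / ((2:ℝ)^(Fintype.card Y) - 2)

lemma vv_eq (B : Finset Y) (A : PSub Y) :
    vv B A = (1 - (-1:ℝ)^((A.1 ∩ B).card)) / 2 := by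
  unfold vv
  rcases Nat.even_or_odd (A.1 ∩ B).card with h | h
  · rw [if_neg (Nat.not_odd_iff_even.2 h), h.neg_one_pow]; norm_num
  · rw [if_pos h, h.neg_one_pow]; norm_num

lemma two_pow_sub_two_pos (hY : 2 ≤ Fintype.card Y) : (0:ℝ) < 2^(Fintype.card Y) - 2 := by
  have : (2:ℝ)^2 ≤ 2^(Fintype.card Y) := by
    apply pow_le_pow_right₀ (by norm_num) hY
  norm_num at this ⊢
  linarith

lemma card_psub_real (hY : 2 ≤ Fintype.card Y) :
    ∑ _A : PSub Y, (1:ℝ) = 2^(Fintype.card Y) - 2 := by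
  have h := sum_psub (Y := Y) (by omega) (fun _ => (1:ℝ))
  rw [h]
  have : ∑ _A : Finset Y, (1:ℝ) = 2^(Fintype.card Y) := by
    rw [Finset.sum_const, Finset.card_univ, Fintype.card_finset, nsmul_eq_mul]
    push_cast
    ring
  rw [this]; ring

lemma sum_char_psub (hY : 2 ≤ Fintype.card Y) (T : Finset Y) :
    ∑ A : PSub Y, (-1:ℝ)^((A.1 ∩ T).card) =
      (if T = ∅ then (2:ℝ)^(Fintype.card Y) else 0) - 1 - (-1:ℝ)^(T.card) := by
  have h := sum_psub (Y := Y) (by omega) (fun A => (-1:ℝ)^((A ∩ T).card))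
  rw [h]
  have h1 : ∑ A : Finset Y, (-1:ℝ)^((A ∩ T).card) = ∑ A : Finset Y, (-1:ℝ)^((T ∩ A).card) := by
    apply Finset.sum_congr rfl; intro A _; rw [Finset.inter_comm]
  rw [h1, sum_char]
  simp [Finset.univ_inter, Finset.empty_inter]

end OneDim4

section OneDim5
open scoped symmDiff
variable {Y : Type} [Fintype Y] [DecidableEq Y]

lemma odd_ne_empty {B : Finset Y} (hB : Odd B.card) : B ≠ ∅ := by
  rintro rfl; simp [Nat.odd_iff] at hB

lemma sum_char_psub_odd (hY : 2 ≤ Fintype.card Y) {B : Finset Y} (hB : Odd B.card) :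
    ∑ A : PSub Y, (-1:ℝ)^((A.1 ∩ B).card) = 0 := by
  rw [sum_char_psub hY, if_neg (odd_ne_empty hB), hB.neg_one_pow]; ring

lemma even_card_symmDiff {B S : Finset Y} (hB : Odd B.card) (hS : Odd S.card) :
    Even (B ∆ S).card := by
  have h := card_symmDiff_par B S
  rw [Nat.odd_iff] at hB hS
  rw [Nat.even_iff]
  omega

lemma sum_char_psub_symmDiff (hY : 2 ≤ Fintype.card Y) {B S : Finset Y}
    (hB : Odd B.card) (hS : Odd S.card) :
    ∑ A : PSub Y, (-1:ℝ)^((A.1 ∩ (B ∆ S)).card) =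
      (if B = S then (2:ℝ)^(Fintype.card Y) else 0) - 2 := by
  rw [sum_char_psub hY, (even_card_symmDiff hB hS).neg_one_pow]
  simp only [Finset.symmDiff_eq_empty]
  ring

lemma dual_one (hY : 2 ≤ Fintype.card Y) {B S : Finset Y}
    (hB : Odd B.card) (hS : Odd S.card) :
    ∑ A : PSub Y, ww B A * vv S A = if B = S then 1 else 0 := by
  have hpos := two_pow_sub_two_pos (Y := Y) hY
  have expand : ∀ A : PSub Y, ww B A * vv S A =
      ((2 / ((2:ℝ)^(Fintype.card Y) - 2)) * 1
        - (2 / ((2:ℝ)^(Fintype.card Y) - 2)) * (-1:ℝ)^((A.1 ∩ S).card)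
        - (-1:ℝ)^((A.1 ∩ B).card)
        + (-1:ℝ)^((A.1 ∩ (B ∆ S)).card)) * (1 / (2:ℝ)^(Fintype.card Y)) := by
    intro A
    rw [ww, vv_eq, ← char_mul]
    have h2 : ((2:ℝ)^(Fintype.card Y)) ≠ 0 := by positivity
    field_simp
    ring
  rw [Finset.sum_congr rfl (fun A _ => expand A), ← Finset.sum_mul,
    Finset.sum_add_distrib, Finset.sum_sub_distrib, Finset.sum_sub_distrib,
    ← Finset.mul_sum, ← Finset.mul_sum, card_psub_real hY,
    sum_char_psub_odd hY hB, sum_char_psub_odd hY hS,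
    sum_char_psub_symmDiff hY hB hS]
  have h2 : ((2:ℝ)^(Fintype.card Y)) ≠ 0 := by positivity
  rcases eq_or_ne B S with rfl | h
  · rw [if_pos rfl, if_pos rfl]
    field_simp
    ring
  · rw [if_neg h, if_neg h]
    field_simp
    ring
end OneDim5

section OneDim6
open scoped symmDiff
variable {Y : Type} [Fintype Y] [DecidableEq Y]

lemma psub_ne_pcompl (a : PSub Y) : a ≠ pcompl a := by
  intro h
  obtain ⟨x, hx⟩ := a.2.1
  have : a.1 = (a.1)ᶜ := congrArg Subtype.val h
  have hx' : x ∈ (a.1)ᶜ := this ▸ hx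
  exact (Finset.mem_compl.1 hx') hx

lemma symmDiff_eq_univ_iff (a b : PSub Y) : a.1 ∆ b.1 = Finset.univ ↔ b = pcompl a := by
  constructor
  · intro h
    have h' : a.1 ∆ b.1 = (⊤ : Finset Y) := by rw [Finset.top_eq_univ]; exact h
    have hc : IsCompl a.1 b.1 := (symmDiff_eq_top (a := a.1) (b := b.1)).1 h'
    apply Subtype.ext
    exact (hc.compl_eq).symm
  · intro h
    subst h
    have h3 : a.1 ∆ (a.1)ᶜ = (⊤ : Finset Y) := IsCompl.symmDiff_eq_top isCompl_compl
    rw [Finset.top_eq_univ] at h3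
    exact h3

lemma sum_char_odd_count (hY : 2 ≤ Fintype.card Y) :
    ∑ _B ∈ univ.filter (fun B : Finset Y => Odd B.card), (1:ℝ)
      = (2:ℝ)^(Fintype.card Y) / 2 := by
  have : Nonempty Y := Fintype.card_pos_iff.mp (by omega)
  have h := sum_char_odd (∅ : Finset Y)
  simp only [Finset.empty_inter, Finset.card_empty, pow_zero] at h
  have hne : (∅ : Finset Y) ≠ Finset.univ := fun hh => Finset.univ_nonempty.ne_empty hh.symm
  rw [h, if_neg hne]
  norm_num

lemma sum_char_odd_psub (hY : 2 ≤ Fintype.card Y) (a : PSub Y) :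
    ∑ B ∈ univ.filter (fun B : Finset Y => Odd B.card), (-1:ℝ)^((a.1 ∩ B).card) = 0 := by
  rw [sum_char_odd, if_neg a.2.1.ne_empty, if_neg a.2.2]
  ring

lemma sum_char_odd_symmDiff (hY : 2 ≤ Fintype.card Y) (a b : PSub Y) :
    ∑ B ∈ univ.filter (fun B : Finset Y => Odd B.card), (-1:ℝ)^(((a.1 ∆ b.1) ∩ B).card)
      = ((if b = a then (2:ℝ)^(Fintype.card Y) else 0)
        - (if b = pcompl a then (2:ℝ)^(Fintype.card Y) else 0)) / 2 := by
  rw [sum_char_odd]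
  have h1 : (a.1 ∆ b.1 = ∅) ↔ (b = a) := by
    rw [Finset.symmDiff_eq_empty]
    constructor
    · intro h; exact (Subtype.ext h).symm
    · intro h; rw [h]
  have h2 : (a.1 ∆ b.1 = Finset.univ) ↔ (b = pcompl a) := symmDiff_eq_univ_iff a b
  simp only [h1, h2]

lemma kernel_one (hY : 2 ≤ Fintype.card Y) (a b : PSub Y) :
    ∑ B ∈ univ.filter (fun B : Finset Y => Odd B.card), vv B a * ww B b = mm a b := by
  have hpos := two_pow_sub_two_pos (Y := Y) hY
  have h2 : ((2:ℝ)^(Fintype.card Y)) ≠ 0 := by positivity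
  have expand : ∀ B : Finset Y, vv B a * ww B b =
      ((2 / ((2:ℝ)^(Fintype.card Y) - 2)) * 1
        - (2 / ((2:ℝ)^(Fintype.card Y) - 2)) * (-1:ℝ)^((a.1 ∩ B).card)
        - (-1:ℝ)^((b.1 ∩ B).card)
        + (-1:ℝ)^(((a.1 ∆ b.1) ∩ B).card)) * (1 / (2:ℝ)^(Fintype.card Y)) := by
    intro B
    have hmul : (-1:ℝ)^((B ∩ a.1).card) * (-1:ℝ)^((B ∩ b.1).card)
        = (-1:ℝ)^((B ∩ (a.1 ∆ b.1)).card) := char_mul B a.1 b.1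
    rw [vv_eq, ww]
    rw [Finset.inter_comm a.1 B, Finset.inter_comm b.1 B, Finset.inter_comm (a.1 ∆ b.1) B,
      ← hmul]
    field_simp
    ring
  rw [Finset.sum_congr rfl (fun B _ => expand B), ← Finset.sum_mul,
    Finset.sum_add_distrib, Finset.sum_sub_distrib, Finset.sum_sub_distrib,
    ← Finset.mul_sum, ← Finset.mul_sum, sum_char_odd_count hY,
    sum_char_odd_psub hY a, sum_char_odd_psub hY b, sum_char_odd_symmDiff hY a b, mm]
  rcases eq_or_ne b a with rfl | hba
  · rw [if_pos rfl, if_pos rfl, if_neg (psub_ne_pcompl b), if_neg (psub_ne_pcompl b)]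
    field_simp
    ring
  · rcases eq_or_ne b (pcompl a) with rfl | hbc
    · rw [if_neg hba, if_neg hba, if_pos rfl, if_pos rfl]
      field_simp
      ring
    · rw [if_neg hba, if_neg hba, if_neg hbc, if_neg hbc]
      field_simp
      ring

end OneDim6

section MultiDim
variable {Y : Type} [Fintype Y] [DecidableEq Y]

lemma card_psub_real' (hY : 2 ≤ Fintype.card Y) :
    ((Fintype.card (PSub Y) : ℝ)) = 2^(Fintype.card Y) - 2 := by
  rw [← card_psub_real hY, Finset.sum_const, Finset.card_univ, nsmul_eq_mul, mul_one]

/-- The complementation equivalence. -/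
def pcomplEquiv (Y : Type) [Fintype Y] [DecidableEq Y] : PSub Y ≃ PSub Y where
  toFun := pcompl
  invFun := pcompl
  left_inv := fun a => Subtype.ext (by simp [pcompl])
  right_inv := fun a => Subtype.ext (by simp [pcompl])

variable {d : ℕ} {X : Fin d → Type} [∀ i, Fintype (X i)] [∀ i, DecidableEq (X i)]

lemma key_update (f : (∀ i, PSub (X i)) → ℝ) (hf : IsAdditiveBox f)
    (hX : ∀ i, 2 ≤ Fintype.card (X i)) (A : ∀ i, PSub (X i)) (j : Fin d) :
    ∑ b : PSub (X j), mm (A j) b * f (Function.update A j b) = f A := by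
  classical
  set n := Fintype.card (X j) with hn
  have hpos := two_pow_sub_two_pos (Y := X j) (hX j)
  set F : PSub (X j) → ℝ := fun b => f (Function.update A j b) with hF
  set K : ℝ := f A + f (Function.update A j (pcompl (A j))) with hK
  have hpair : ∀ b : PSub (X j), F b + F (pcompl b) = K := by
    intro b
    have h := hf j (Function.update A j b) A
      (fun j' hj' => Function.update_of_ne hj' _ _)
    simp only [Function.update_self, Function.update_idem] at h
    simpa [hF, hK, Function.update_eq_self] using h
  have hrev : ∑ b : PSub (X j), F (pcompl b) = ∑ b : PSub (X j), F b :=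
    Fintype.sum_equiv (pcomplEquiv (X j)) _ _ (fun b => rfl)
  have hsum2 : 2 * ∑ b : PSub (X j), F b = ((2:ℝ)^n - 2) * K := by
    have h2 : ∑ b : PSub (X j), F b + ∑ b : PSub (X j), F (pcompl b)
        = ∑ _b : PSub (X j), K := by
      rw [← Finset.sum_add_distrib]
      exact Finset.sum_congr rfl (fun b _ => hpair b)
    rw [hrev] at h2
    have h3 : ∑ _b : PSub (X j), K = ((2:ℝ)^n - 2) * K := by
      rw [Finset.sum_const, Finset.card_univ, nsmul_eq_mul, card_psub_real' (hX j)]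
    linarith
  have expand : ∀ b : PSub (X j), mm (A j) b * F b =
      (if b = A j then F b else 0)/2 - (if b = pcompl (A j) then F b else 0)/2
        + (1/((2:ℝ)^n - 2)) * F b := by
    intro b
    rw [mm]
    split_ifs <;> ring
  rw [Finset.sum_congr rfl (fun b _ => expand b), Finset.sum_add_distrib,
    Finset.sum_sub_distrib, ← Finset.sum_div, ← Finset.sum_div, ← Finset.mul_sum,
    Finset.sum_ite_eq' Finset.univ (A j) F, Finset.sum_ite_eq' Finset.univ (pcompl (A j)) F]
  simp only [Finset.mem_univ, if_pos]
  have hFA : F (A j) = f A := by rw [hF]; simp [Function.update_eq_self]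
  have hKF : F (pcompl (A j)) = K - f A := by rw [hK, hF]; ring
  rw [hFA, hKF]
  have hSF : ∑ b : PSub (X j), F b = ((2:ℝ)^n - 2) * K / 2 := by
    linear_combination hsum2 / 2
  rw [hSF]
  have hne : (2:ℝ)^n - 2 ≠ 0 := hpos.ne'
  field_simp
  ring
end MultiDim

section MultiDim2
variable {d : ℕ} {X : Fin d → Type} [∀ i, Fintype (X i)] [∀ i, DecidableEq (X i)]

lemma reproduce (f : (∀ i, PSub (X i)) → ℝ) (hf : IsAdditiveBox f)
    (hX : ∀ i, 2 ≤ Fintype.card (X i)) (A : ∀ i, PSub (X i)) (s : Finset (Fin d)) :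
    ∑ A' ∈ Fintype.piFinset
        (fun i => if i ∈ s then (Finset.univ : Finset (PSub (X i))) else {A i}),
      (∏ i ∈ s, mm (A i) (A' i)) * f A' = f A := by
  classical
  induction s using Finset.induction_on with
  | empty =>
    simp only [Finset.notMem_empty, if_false, Fintype.piFinset_singleton,
      Finset.sum_singleton, Finset.prod_empty, one_mul]
  | @insert j s hj ih =>
    set P : Finset (Fin d) → Finset (∀ i, PSub (X i)) := fun t => Fintype.piFinset
        (fun i => if i ∈ t then (Finset.univ : Finset (PSub (X i))) else {A i}) with hP
    have hmem : ∀ p : PSub (X j) × (∀ i, PSub (X i)), p.2 ∈ P s →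
        Function.update p.2 j p.1 ∈ P (insert j s) := by
      intro p hp
      rw [hP, Fintype.mem_piFinset] at hp ⊢
      intro i
      rcases eq_or_ne i j with rfl | hij
      · simp [Function.update_self]
      · rw [Function.update_of_ne hij]
        have hpi := hp i
        by_cases his : i ∈ s
        · simp [his] at hpi ⊢
        · have hni : i ∉ insert j s := by simp [hij, his]
          simpa [his, hni] using hpi
    have hmem' : ∀ A' ∈ P (insert j s), (A' j, Function.update A' j (A j)) ∈
        (Finset.univ : Finset (PSub (X j))) ×ˢ P s := by
      intro A' hA'
      rw [hP, Fintype.mem_piFinset] at hA'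
      rw [Finset.mem_product]
      refine ⟨Finset.mem_univ _, ?_⟩
      rw [hP, Fintype.mem_piFinset]
      intro i
      dsimp only
      rcases eq_or_ne i j with rfl | hij
      · simp [Function.update_self, hj]
      · rw [Function.update_of_ne hij]
        have hAi := hA' i
        by_cases his : i ∈ s
        · simp [his]
        · have hni : i ∉ insert j s := by simp [hij, his]
          simpa [his, hni] using hAi
    have hstep : ∑ A' ∈ P (insert j s), (∏ i ∈ insert j s, mm (A i) (A' i)) * f A'
        = ∑ p ∈ (Finset.univ : Finset (PSub (X j))) ×ˢ P s,
            (∏ i ∈ insert j s, mm (A i) ((Function.update p.2 j p.1) i))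
              * f (Function.update p.2 j p.1) := by
      refine Finset.sum_nbij' (fun A' => (A' j, Function.update A' j (A j)))
        (fun p => Function.update p.2 j p.1) hmem' (fun p hp => ?_) (fun A' hA' => ?_)
        (fun p hp => ?_) (fun A' hA' => ?_)
      · apply hmem
        exact (Finset.mem_product.1 hp).2
      · simp only [Function.update_idem, Function.update_eq_self]
      · rw [Finset.mem_product, hP, Fintype.mem_piFinset] at hp
        have hpj : p.2 j = A j := by simpa [hj] using hp.2 j
        ext : 1
        · simp
        · funext i
          rcases eq_or_ne i j with rfl | hij
          · simp [hpj]
          · simp [Function.update_of_ne hij]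
      · have hupd : Function.update (Function.update A' j (A j)) j (A' j) = A' := by
          rw [Function.update_idem, Function.update_eq_self]
        dsimp only
        rw [hupd]
    rw [hstep, Finset.sum_product]
    have hinner : ∀ b : PSub (X j), ∀ A' ∈ P s,
        (∏ i ∈ insert j s, mm (A i) ((Function.update A' j b) i))
            * f (Function.update A' j b)
          = mm (A j) b * ((∏ i ∈ s, mm (A i) (A' i)) * f (Function.update A' j b)) := by
      intro b A' _
      rw [Finset.prod_insert hj, Function.update_self]
      have : ∀ i ∈ s, mm (A i) ((Function.update A' j b) i) = mm (A i) (A' i) := by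
        intro i his
        rw [Function.update_of_ne (by rintro rfl; exact hj his)]
      rw [Finset.prod_congr rfl this]
      ring
    calc ∑ b : PSub (X j), ∑ A' ∈ P s,
          (∏ i ∈ insert j s, mm (A i) ((Function.update A' j b) i))
            * f (Function.update A' j b)
        = ∑ A' ∈ P s, (∏ i ∈ s, mm (A i) (A' i))
            * ∑ b : PSub (X j), mm (A' j) b * f (Function.update A' j b) := by
          rw [Finset.sum_comm]
          apply Finset.sum_congr rfl
          intro A' hA'
          have hAj : A' j = A j := by
            rw [hP, Fintype.mem_piFinset] at hA'
            simpa [hj] using hA' j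
          rw [Finset.mul_sum]
          apply Finset.sum_congr rfl
          intro b _
          rw [hinner b A' hA', hAj]
          ring
      _ = f A := by
          have : ∀ A' ∈ P s, (∏ i ∈ s, mm (A i) (A' i))
              * ∑ b : PSub (X j), mm (A' j) b * f (Function.update A' j b)
              = (∏ i ∈ s, mm (A i) (A' i)) * f A' := by
            intro A' _
            rw [key_update f hf hX A' j]
          rw [Finset.sum_congr rfl this]
          exact ih
end MultiDim2

section MultiDim3
variable {Y : Type} [Fintype Y] [DecidableEq Y]

lemma vv_add_compl {B : Finset Y} (hB : Odd B.card) (A : PSub Y) :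
    vv B A + vv B (pcompl A) = 1 := by
  have hcompl : (pcompl A).1 = (A.1)ᶜ := rfl
  have hsd : (A.1)ᶜ ∩ B = B \ A.1 := by
    ext y; simp only [Finset.mem_inter, Finset.mem_sdiff, Finset.mem_compl]; tauto
  have hcard : (B ∩ A.1).card + (B \ A.1).card = B.card := Finset.card_inter_add_card_sdiff B A.1
  have hiff : Odd (((pcompl A).1 ∩ B).card) ↔ ¬ Odd ((A.1 ∩ B).card) := by
    rw [hcompl, hsd, Finset.inter_comm]
    rw [Nat.odd_iff] at hB ⊢
    rw [Nat.odd_iff]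
    omega
  unfold vv
  by_cases h : Odd ((A.1 ∩ B).card)
  · rw [if_pos h, if_neg (by rw [hiff]; exact not_not_intro h)]; ring
  · rw [if_neg h, if_pos (hiff.2 h)]; ring

variable {d : ℕ} {X : Fin d → Type} [∀ i, Fintype (X i)] [∀ i, DecidableEq (X i)]

lemma etaBox_eq_prod_vv (B : ∀ i, Finset (X i)) (A : ∀ i, PSub (X i)) :
    etaBox B A = ∏ i, vv (B i) (A i) := rfl

lemma eta_additive (B : ∀ i, Finset (X i)) (hB : ∀ i, Odd (B i).card) :
    IsAdditiveBox (etaBox B) := by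
  intro i A C hAC
  have key : ∀ D : ∀ i, PSub (X i),
      etaBox B D + etaBox B (Function.update D i (pcompl (D i)))
        = ∏ j ∈ Finset.univ.erase i, vv (B j) (D j) := by
    intro D
    have h1 : etaBox B D = vv (B i) (D i) * ∏ j ∈ Finset.univ.erase i, vv (B j) (D j) := by
      rw [etaBox_eq_prod_vv, ← Finset.mul_prod_erase Finset.univ _ (Finset.mem_univ i)]
    have h2 : etaBox B (Function.update D i (pcompl (D i)))
        = vv (B i) (pcompl (D i)) * ∏ j ∈ Finset.univ.erase i, vv (B j) (D j) := by
      rw [etaBox_eq_prod_vv, ← Finset.mul_prod_erase Finset.univ _ (Finset.mem_univ i),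
        Function.update_self]
      congr 1
      apply Finset.prod_congr rfl
      intro j hj
      rw [Function.update_of_ne (Finset.ne_of_mem_erase hj)]
    rw [h1, h2, ← add_mul, vv_add_compl (hB i), one_mul]
  rw [key A, key C]
  apply Finset.prod_congr rfl
  intro j hj
  rw [hAC j (Finset.ne_of_mem_erase hj)]

/-- The dual functional. -/
noncomputable def Phi (B : ∀ i, Finset (X i)) (f : (∀ i, PSub (X i)) → ℝ) : ℝ :=
  ∑ A : ∀ i, PSub (X i), (∏ i, ww (B i) (A i)) * f A

lemma prod_ite_eq_ite {B B' : ∀ i, Finset (X i)} :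
    (∏ i, if B i = B' i then (1:ℝ) else 0) = if B = B' then 1 else 0 := by
  rcases eq_or_ne B B' with rfl | h
  · simp
  · rw [if_neg h]
    obtain ⟨i, hi⟩ := Function.ne_iff.1 h
    exact Finset.prod_eq_zero (Finset.mem_univ i) (if_neg hi)

lemma Phi_eta (hX : ∀ i, 2 ≤ Fintype.card (X i)) {B B' : ∀ i, Finset (X i)}
    (hB : ∀ i, Odd (B i).card) (hB' : ∀ i, Odd (B' i).card) :
    Phi B (etaBox B') = if B = B' then 1 else 0 := by
  have h1 : Phi B (etaBox B')
      = ∑ A : ∀ i, PSub (X i), ∏ i, (ww (B i) (A i) * vv (B' i) (A i)) := by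
    unfold Phi
    apply Finset.sum_congr rfl
    intro A _
    rw [etaBox_eq_prod_vv, ← Finset.prod_mul_distrib]
  have h2 : ∏ i, ∑ a : PSub (X i), (ww (B i) a * vv (B' i) a)
      = ∑ A : ∀ i, PSub (X i), ∏ i, (ww (B i) (A i) * vv (B' i) (A i)) := by
    rw [Finset.prod_univ_sum (fun i => (Finset.univ : Finset (PSub (X i))))
      (fun i a => ww (B i) a * vv (B' i) a), Fintype.piFinset_univ]
  rw [h1, ← h2, ← prod_ite_eq_ite]
  apply Finset.prod_congr rfl
  intro i _
  exact dual_one (hX i) (hB i) (hB' i)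

end MultiDim3

section Final
variable {d : ℕ} {X : Fin d → Type} [∀ i, Fintype (X i)] [∀ i, DecidableEq (X i)]

set_option maxHeartbeats 1000000 in
lemma kernel_expand (hX : ∀ i, 2 ≤ Fintype.card (X i)) (A A' : ∀ i, PSub (X i)) :
    ∑ B ∈ Fintype.piFinset
        (fun i => Finset.univ.filter (fun B : Finset (X i) => Odd B.card)),
      (∏ i, vv (B i) (A i) * ww (B i) (A' i)) = ∏ i, mm (A i) (A' i) := by
  calc ∑ B ∈ Fintype.piFinset
        (fun i => Finset.univ.filter (fun B : Finset (X i) => Odd B.card)),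
      (∏ i, vv (B i) (A i) * ww (B i) (A' i))
      = ∏ i, ∑ b ∈ Finset.univ.filter (fun B : Finset (X i) => Odd B.card),
          vv b (A i) * ww b (A' i) :=
        (Finset.prod_univ_sum
          (fun i => Finset.univ.filter (fun B : Finset (X i) => Odd B.card))
          (fun i b => vv b (A i) * ww b (A' i))).symm
    _ = ∏ i, mm (A i) (A' i) :=
        Finset.prod_congr rfl (fun i _ => kernel_one (hX i) (A i) (A' i))

lemma sum_oddbox (F : (∀ i, Finset (X i)) → ℝ) :
    ∑ B ∈ Fintype.piFinset
        (fun i => Finset.univ.filter (fun B : Finset (X i) => Odd B.card)), F B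
      = ∑ B : {B : ∀ i, Finset (X i) // ∀ i, Odd (B i).card}, F B.1 := by
  apply Finset.sum_subtype
  intro B
  simp [Fintype.mem_piFinset]

lemma repr_eq (hX : ∀ i, 2 ≤ Fintype.card (X i)) (f : (∀ i, PSub (X i)) → ℝ)
    (hf : IsAdditiveBox f) :
    f = ∑ B : {B : ∀ i, Finset (X i) // ∀ i, Odd (B i).card}, Phi B.1 f • etaBox B.1 := by
  funext A
  have h0 : (∑ B : {B : ∀ i, Finset (X i) // ∀ i, Odd (B i).card},
      Phi B.1 f • etaBox B.1) A
      = ∑ B : {B : ∀ i, Finset (X i) // ∀ i, Odd (B i).card}, Phi B.1 f * etaBox B.1 A := by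
    rw [Finset.sum_apply]
    apply Finset.sum_congr rfl
    intro B _
    rfl
  rw [h0, ← sum_oddbox (fun B => Phi B f * etaBox B A)]
  have h1 : ∀ B : ∀ i, Finset (X i), Phi B f * etaBox B A
      = ∑ A' : ∀ i, PSub (X i), (∏ i, vv (B i) (A i) * ww (B i) (A' i)) * f A' := by
    intro B
    rw [Phi, Finset.sum_mul]
    apply Finset.sum_congr rfl
    intro A' _
    rw [etaBox_eq_prod_vv, Finset.prod_mul_distrib]
    ring
  rw [Finset.sum_congr rfl (fun B _ => h1 B), Finset.sum_comm]
  have h2 : ∀ A' : ∀ i, PSub (X i),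
      ∑ B ∈ Fintype.piFinset
        (fun i => Finset.univ.filter (fun B : Finset (X i) => Odd B.card)),
        (∏ i, vv (B i) (A i) * ww (B i) (A' i)) * f A'
      = (∏ i, mm (A i) (A' i)) * f A' := by
    intro A'
    rw [← Finset.sum_mul, kernel_expand hX A A']
  rw [Finset.sum_congr rfl (fun A' _ => h2 A')]
  have h3 := reproduce f hf hX A Finset.univ
  have h4 : (fun i => if i ∈ (Finset.univ : Finset (Fin d))
      then (Finset.univ : Finset (PSub (X i))) else {A i}) = fun i => Finset.univ := by
    funext i
    rw [if_pos (Finset.mem_univ i)]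
  rw [h4, Fintype.piFinset_univ] at h3
  exact h3.symm

/-- The submodule of additive functions. -/
def addSubmodule (d : ℕ) (X : Fin d → Type) [∀ i, Fintype (X i)] [∀ i, DecidableEq (X i)] :
    Submodule ℝ ((∀ i, PSub (X i)) → ℝ) where
  carrier := {f | IsAdditiveBox f}
  add_mem' := by
    intro f g hf hg i A C h
    have h1 := hf i A C h
    have h2 := hg i A C h
    simp only [Pi.add_apply]
    linarith
  zero_mem' := by intro i A C h; simp
  smul_mem' := by
    intro c f hf i A C h
    have h1 := hf i A C h
    simp only [Pi.smul_apply, smul_eq_mul]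
    linear_combination c * h1

end Final

/-- the functions `η_B`, for `B` ranging over boxes with all factors of
odd cardinality, form a basis of the space of additive functions on proper boxes. -/
theorem stmt_12 {d : ℕ} (X : Fin d → Type) [∀ i, Fintype (X i)] [∀ i, DecidableEq (X i)]
    (hX : ∀ i, 2 ≤ Fintype.card (X i)) :
    LinearIndependent ℝ
      (fun B : {B : ∀ i, Finset (X i) // ∀ i, Odd (B i).card} => etaBox B.1) ∧
    (Submodule.span ℝ
        (Set.range (fun B : {B : ∀ i, Finset (X i) // ∀ i, Odd (B i).card} => etaBox B.1))
        : Set ((∀ i, PSub (X i)) → ℝ))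
      = {f | IsAdditiveBox f} := by
  classical
  constructor
  · rw [Fintype.linearIndependent_iff]
    intro g hg B₀
    have h := congrArg (Phi B₀.1) hg
    have hz : Phi B₀.1 (0 : (∀ i, PSub (X i)) → ℝ) = 0 := by
      unfold Phi
      simp
    rw [hz] at h
    have hlin : Phi B₀.1 (∑ B : {B : ∀ i, Finset (X i) // ∀ i, Odd (B i).card},
        g B • etaBox B.1)
        = ∑ B : {B : ∀ i, Finset (X i) // ∀ i, Odd (B i).card},
            g B * Phi B₀.1 (etaBox B.1) := by
      unfold Phi
      have happ : ∀ A : ∀ i, PSub (X i),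
          (∑ B : {B : ∀ i, Finset (X i) // ∀ i, Odd (B i).card}, g B • etaBox B.1) A
          = ∑ B : {B : ∀ i, Finset (X i) // ∀ i, Odd (B i).card}, g B * etaBox B.1 A := by
        intro A
        rw [Finset.sum_apply]
        apply Finset.sum_congr rfl
        intro B _
        rfl
      calc ∑ A : ∀ i, PSub (X i), (∏ i, ww (B₀.1 i) (A i))
            * (∑ B : {B : ∀ i, Finset (X i) // ∀ i, Odd (B i).card}, g B • etaBox B.1) A
          = ∑ A : ∀ i, PSub (X i), ∑ B : {B : ∀ i, Finset (X i) // ∀ i, Odd (B i).card},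
              g B * ((∏ i, ww (B₀.1 i) (A i)) * etaBox B.1 A) := by
            apply Finset.sum_congr rfl
            intro A _
            rw [happ A, Finset.mul_sum]
            apply Finset.sum_congr rfl
            intro B _
            ring
        _ = ∑ B : {B : ∀ i, Finset (X i) // ∀ i, Odd (B i).card},
              g B * ∑ A : ∀ i, PSub (X i), (∏ i, ww (B₀.1 i) (A i)) * etaBox B.1 A := by
            rw [Finset.sum_comm]
            apply Finset.sum_congr rfl
            intro B _
            rw [Finset.mul_sum]
    rw [hlin] at h
    have heval : ∀ B : {B : ∀ i, Finset (X i) // ∀ i, Odd (B i).card},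
        g B * Phi B₀.1 (etaBox B.1) = g B * (if B = B₀ then 1 else 0) := by
      intro B
      rw [Phi_eta hX B₀.2 B.2]
      congr 1
      simp [Subtype.ext_iff, eq_comm]
    rw [Finset.sum_congr rfl (fun B _ => heval B)] at h
    simp only [mul_ite, mul_one, mul_zero] at h
    rw [Finset.sum_ite_eq' Finset.univ B₀ g, if_pos (Finset.mem_univ B₀)] at h
    exact h
  · ext f
    simp only [SetLike.mem_coe, Set.mem_setOf_eq]
    constructor
    · intro hmem
      have hle : Submodule.span ℝ
          (Set.range (fun B : {B : ∀ i, Finset (X i) // ∀ i, Odd (B i).card} => etaBox B.1))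
          ≤ addSubmodule d X := by
        rw [Submodule.span_le]
        rintro _ ⟨B, rfl⟩
        exact eta_additive B.1 B.2
      exact hle hmem
    · intro hf
      rw [repr_eq hX f hf]
      apply Submodule.sum_mem
      intro B _
      exact Submodule.smul_mem _ _ (Submodule.subset_span ⟨B, rfl⟩)
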